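/- arXiv:1805.07541 — 4 statements merged into one kernel-verified Lean document; each statement's English description precedes it below -/
import Mathlib

section
/- Let W be a real d×m matrix, let r, λ₁, λ₂ be positive real numbers, and set λᵣ = (1 + 1/r)·(λ₁^r · λ₂ · r / 2^r)^{1/(r+1)}. Then the infimum, over all m×m real symmetric positive definite matrices Ω, of (λ₁/2)·tr(W Ω⁻¹ Wᵀ) + λ₂·tr(Ω^r) equals λᵣ · tr((WᵀW)^{r/(r+1)}); equivalently, it equals λᵣ · Σᵢ σᵢ(W)^{2r/(r+1)}, where σᵢ(W) are the singular values of W. -/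
open Matrix



section helpers

variable {m : ℕ}

lemma myContinuousOn (f : ℝ → ℝ) {A : Matrix (Fin m) (Fin m) ℝ} (s : Set ℝ) (hs : s.Finite) :
    ContinuousOn f s := hs.continuousOn f

/-- real spectral theorem -/
lemma real_spectral {A : Matrix (Fin m) (Fin m) ℝ} (hA : A.IsHermitian) :
    A = (hA.eigenvectorUnitary : Matrix (Fin m) (Fin m) ℝ) * diagonal hA.eigenvalues
        * (hA.eigenvectorUnitary : Matrix (Fin m) (Fin m) ℝ)ᴴ := by
  conv_lhs => rw [hA.spectral_theorem]
  simp [Matrix.star_eq_conjTranspose, RCLike.ofReal_real_eq_id, Function.id_comp]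

lemma real_cfc {A : Matrix (Fin m) (Fin m) ℝ} (hA : A.IsHermitian) (f : ℝ → ℝ) :
    cfc f A = (hA.eigenvectorUnitary : Matrix (Fin m) (Fin m) ℝ)
        * diagonal (f ∘ hA.eigenvalues)
        * (hA.eigenvectorUnitary : Matrix (Fin m) (Fin m) ℝ)ᴴ := by
  rw [hA.cfc_eq, Matrix.IsHermitian.cfc]
  simp [Matrix.star_eq_conjTranspose, RCLike.ofReal_real_eq_id, Function.id_comp]

end helpers
open Matrix

variable {m : ℕ}

lemma unitary_mul_star {A : Matrix (Fin m) (Fin m) ℝ} (hA : A.IsHermitian) :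
    (hA.eigenvectorUnitary : Matrix (Fin m) (Fin m) ℝ)
      * (hA.eigenvectorUnitary : Matrix (Fin m) (Fin m) ℝ)ᴴ = 1 := by
  rw [← Matrix.star_eq_conjTranspose]
  exact (Matrix.mem_unitaryGroup_iff).mp (hA.eigenvectorUnitary).2

lemma unitary_star_mul {A : Matrix (Fin m) (Fin m) ℝ} (hA : A.IsHermitian) :
    (hA.eigenvectorUnitary : Matrix (Fin m) (Fin m) ℝ)ᴴ
      * (hA.eigenvectorUnitary : Matrix (Fin m) (Fin m) ℝ) = 1 := by
  rw [← Matrix.star_eq_conjTranspose]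
  exact (Matrix.mem_unitaryGroup_iff').mp (hA.eigenvectorUnitary).2

lemma trace_conj_diag (U : Matrix (Fin m) (Fin m) ℝ) (hU : Uᴴ * U = 1) (d : Fin m → ℝ) :
    (U * diagonal d * Uᴴ).trace = ∑ i, d i := by
  rw [trace_mul_cycle, hU, one_mul, trace_diagonal]

lemma inv_conj_diag (U : Matrix (Fin m) (Fin m) ℝ) (hU : Uᴴ * U = 1) (hU' : U * Uᴴ = 1)
    (d : Fin m → ℝ) (hd : ∀ i, d i ≠ 0) :
    (U * diagonal d * Uᴴ)⁻¹ = U * diagonal (fun i => (d i)⁻¹) * Uᴴ := by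
  apply Matrix.inv_eq_right_inv
  calc U * diagonal d * Uᴴ * (U * diagonal (fun i => (d i)⁻¹) * Uᴴ)
      = U * (diagonal d * (Uᴴ * U) * diagonal (fun i => (d i)⁻¹)) * Uᴴ := by
        noncomm_ring
    _ = 1 := by
        rw [hU, mul_one, diagonal_mul_diagonal]
        have : (fun i => d i * (d i)⁻¹) = fun _ => (1:ℝ) := by
          funext i; exact mul_inv_cancel₀ (hd i)
        rw [this, diagonal_one, mul_one, hU']

lemma conj_mul_conj (U : Matrix (Fin m) (Fin m) ℝ) (hU : Uᴴ * U = 1)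
    (d e : Fin m → ℝ) :
    (U * diagonal d * Uᴴ) * (U * diagonal e * Uᴴ) = U * diagonal (fun i => d i * e i) * Uᴴ := by
  calc (U * diagonal d * Uᴴ) * (U * diagonal e * Uᴴ)
      = U * (diagonal d * (Uᴴ * U) * diagonal e) * Uᴴ := by noncomm_ring
    _ = _ := by rw [hU, mul_one, diagonal_mul_diagonal]

lemma posDef_conj_diag (U : Matrix (Fin m) (Fin m) ℝ) (hU' : U * Uᴴ = 1)
    (d : Fin m → ℝ) (hd : ∀ i, 0 < d i) :
    (U * diagonal d * Uᴴ).PosDef := by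
  have hD : (diagonal d).PosDef := Matrix.PosDef.diagonal hd
  rw [posDef_iff_dotProduct_mulVec]
  constructor
  · have : (U * diagonal d * Uᴴ)ᴴ = U * diagonal d * Uᴴ := by
      simp only [conjTranspose_mul, conjTranspose_conjTranspose, hD.1.eq, mul_assoc]
    exact this
  · intro x hx
    have hy : Uᴴ *ᵥ x ≠ 0 := by
      intro h
      apply hx
      have : (U * Uᴴ) *ᵥ x = U *ᵥ (Uᴴ *ᵥ x) := by rw [mulVec_mulVec]
      rw [hU', one_mulVec] at this
      rw [this, h, mulVec_zero]
    have := hD.dotProduct_mulVec_pos hy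
    simpa only [star_mulVec, dotProduct_mulVec, vecMul_vecMul, star_eq_conjTranspose,
      conjTranspose_conjTranspose, mul_assoc] using this

lemma trace_cfc' {A : Matrix (Fin m) (Fin m) ℝ} (hA : A.IsHermitian) (f : ℝ → ℝ) :
    (cfc f A).trace = ∑ i, f (hA.eigenvalues i) := by
  rw [real_cfc hA f, trace_conj_diag _ (unitary_star_mul hA)]
  rfl

lemma entry_conj_diag (Q : Matrix (Fin m) (Fin m) ℝ) (e : Fin m → ℝ) (j : Fin m) :
    (Q * diagonal e * Qᴴ) j j = ∑ i, e i * (Q j i)^2 := by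
  rw [Matrix.mul_apply]
  congr 1; funext i
  rw [Matrix.mul_diagonal]
  simp [Matrix.conjTranspose_apply]
  ring

lemma const_id {r lam1 lam2 : ℝ} (hr : 0 < r) (h1 : 0 < lam1) (h2 : 0 < lam2) :
    ((r+1)/r*(lam1/2)) ^ (r/(r+1)) * ((r+1)*lam2) ^ (1/(r+1))
      = (1 + 1/r) * (lam1 ^ r * lam2 * r / (2:ℝ) ^ r) ^ (1/(r+1)) := by
  have hr1 : (0:ℝ) < r + 1 := by linarith
  have hK1 : (0:ℝ) < (r+1)/r*(lam1/2) := by positivity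
  have hK2 : (0:ℝ) < (r+1)*lam2 := by positivity
  have hX : (0:ℝ) < lam1 ^ r * lam2 * r / (2:ℝ) ^ r := by positivity
  have h11 : (0:ℝ) < 1 + 1/r := by positivity
  have hL : (0:ℝ) < ((r+1)/r*(lam1/2)) ^ (r/(r+1)) * ((r+1)*lam2) ^ (1/(r+1)) := by positivity
  have hR : (0:ℝ) < (1 + 1/r) * (lam1 ^ r * lam2 * r / (2:ℝ) ^ r) ^ (1/(r+1)) := by positivity
  apply Real.log_injOn_pos (Set.mem_Ioi.mpr hL) (Set.mem_Ioi.mpr hR)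
  have e1 : Real.log ((r+1)/r*(lam1/2))
      = Real.log (r+1) - Real.log r + (Real.log lam1 - Real.log 2) := by
    rw [Real.log_mul (by positivity) (by positivity),
      Real.log_div (by positivity) (by positivity),
      Real.log_div (by positivity) (by positivity)]
  have e2 : Real.log ((r+1)*lam2) = Real.log (r+1) + Real.log lam2 := by
    rw [Real.log_mul (by positivity) (by positivity)]
  have e3 : Real.log (lam1 ^ r * lam2 * r / (2:ℝ) ^ r)
      = r * Real.log lam1 + Real.log lam2 + Real.log r - r * Real.log 2 := by
    rw [Real.log_div (by positivity) (by positivity),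
      Real.log_mul (by positivity) (by positivity),
      Real.log_mul (by positivity) (by positivity),
      Real.log_rpow h1, Real.log_rpow (by norm_num)]
  have e4 : Real.log (1 + 1/r) = Real.log (r+1) - Real.log r := by
    rw [show (1 : ℝ) + 1/r = (r+1)/r by field_simp,
      Real.log_div (by positivity) (by positivity)]
  rw [Real.log_mul (by positivity) (by positivity),
    Real.log_mul (by positivity) (by positivity),
    Real.log_rpow hK1, Real.log_rpow hK2, Real.log_rpow hX, e1, e2, e3, e4]
  field_simp
  ring


lemma const_id2 {r lam1 lam2 : ℝ} (hr : 0 < r) (h1 : 0 < lam1) (h2 : 0 < lam2) :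
    (r+1) * lam2 * (lam1/(2*lam2*r)) ^ (r/(r+1))
      = (1 + 1/r) * (lam1 ^ r * lam2 * r / (2:ℝ) ^ r) ^ (1/(r+1)) := by
  have hr1 : (0:ℝ) < r + 1 := by linarith
  have hX : (0:ℝ) < lam1 ^ r * lam2 * r / (2:ℝ) ^ r := by positivity
  have hL : (0:ℝ) < (r+1) * lam2 * (lam1/(2*lam2*r)) ^ (r/(r+1)) := by positivity
  have hR : (0:ℝ) < (1 + 1/r) * (lam1 ^ r * lam2 * r / (2:ℝ) ^ r) ^ (1/(r+1)) := by positivity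
  apply Real.log_injOn_pos (Set.mem_Ioi.mpr hL) (Set.mem_Ioi.mpr hR)
  have e3 : Real.log (lam1 ^ r * lam2 * r / (2:ℝ) ^ r)
      = r * Real.log lam1 + Real.log lam2 + Real.log r - r * Real.log 2 := by
    rw [Real.log_div (by positivity) (by positivity),
      Real.log_mul (by positivity) (by positivity),
      Real.log_mul (by positivity) (by positivity),
      Real.log_rpow h1, Real.log_rpow (by norm_num)]
  have e4 : Real.log (1 + 1/r) = Real.log (r+1) - Real.log r := by
    rw [show (1 : ℝ) + 1/r = (r+1)/r by field_simp,
      Real.log_div (by positivity) (by positivity)]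
  have e5 : Real.log (lam1/(2*lam2*r))
      = Real.log lam1 - (Real.log 2 + Real.log lam2 + Real.log r) := by
    rw [Real.log_div (by positivity) (by positivity),
      Real.log_mul (by positivity) (by positivity),
      Real.log_mul (by positivity) (by positivity)]
  rw [Real.log_mul (by positivity) (by positivity),
    Real.log_mul (by positivity) (by positivity),
    Real.log_mul (by positivity) (by positivity),
    Real.log_rpow (by positivity), Real.log_rpow hX, e3, e4, e5]
  field_simp
  ring

lemma scalar_bound {r lam1 lam2 lamr : ℝ} (hr : 0 < r) (h1 : 0 < lam1) (h2 : 0 < lam2)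
    (hlamr : lamr = (1 + 1 / r) * (lam1 ^ r * lam2 * r / (2 : ℝ) ^ r) ^ (1 / (r + 1)))
    {a c : ℝ} (ha : 0 ≤ a) (hc : 0 < c) :
    lamr * a ^ (r/(r+1)) ≤ (lam1 / 2) * (a / c) + lam2 * c ^ r := by
  have hr1 : (0:ℝ) < r + 1 := by linarith
  have hs0 : 0 < r/(r+1) := by positivity
  have hlamr0 : 0 < lamr := by rw [hlamr]; positivity
  rcases eq_or_lt_of_le ha with h|ha
  · rw [← h, Real.zero_rpow hs0.ne', mul_zero]
    positivity
  · -- a > 0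
    have key := Real.geom_mean_le_arith_mean2_weighted
      (by positivity : (0:ℝ) ≤ r/(r+1)) (by positivity : (0:ℝ) ≤ 1/(r+1))
      (by positivity : (0:ℝ) ≤ (r+1)/r*(lam1/2)*(a/c))
      (by positivity : (0:ℝ) ≤ (r+1)*lam2*c^r)
      (by field_simp)
    have h₁ : (r/(r+1)) * ((r+1)/r*(lam1/2)*(a/c)) = (lam1/2)*(a/c) := by
      field_simp
    have h₂ : (1/(r+1)) * ((r+1)*lam2*c^r) = lam2*c^r := by
      field_simp
    rw [h₁, h₂] at key
    refine le_trans (le_of_eq ?_) key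
    rw [Real.mul_rpow (by positivity) (by positivity),
      Real.mul_rpow (by positivity) (by positivity),
      Real.div_rpow ha.le hc.le,
      Real.mul_rpow (by positivity) (by positivity),
      ← Real.rpow_mul hc.le, mul_one_div, hlamr, ← const_id hr h1 h2,
      Real.mul_rpow (by positivity) (by positivity)]
    have hcs : (0:ℝ) < c ^ (r/(r+1)) := by positivity
    field_simp

lemma scalar_eq {r lam1 lam2 lamr : ℝ} (hr : 0 < r) (h1 : 0 < lam1) (h2 : 0 < lam2)
    (hlamr : lamr = (1 + 1 / r) * (lam1 ^ r * lam2 * r / (2 : ℝ) ^ r) ^ (1 / (r + 1)))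
    {a : ℝ} (ha : 0 < a) :
    (lam1 / 2) * (a / ((lam1/(2*lam2*r)*a) ^ (1/(r+1)))) +
      lam2 * ((lam1/(2*lam2*r)*a) ^ (1/(r+1))) ^ r
      = lamr * a ^ (r/(r+1)) := by
  have hr1 : (0:ℝ) < r + 1 := by linarith
  have hk : (0:ℝ) < lam1/(2*lam2*r) := by positivity
  set k := lam1/(2*lam2*r) with hkdef
  have hka : (0:ℝ) < k*a := by positivity
  have e1 : ((k*a) ^ ((1:ℝ)/(r+1))) ^ (r:ℝ) = (k*a) ^ (r/(r+1)) := by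
    rw [← Real.rpow_mul hka.le]
    congr 1
    field_simp
  have e2 : a / ((k*a) ^ ((1:ℝ)/(r+1))) = a * (k*a) ^ (-(1/(r+1)) : ℝ) := by
    rw [Real.rpow_neg hka.le, div_eq_mul_inv]
  have e3 : (k*a) ^ (r/(r+1)) = (k*a) * (k*a) ^ (-(1/(r+1)) : ℝ) := by
    have h' : r/(r+1) = 1 + (-(1/(r+1))) := by field_simp; ring
    rw [h', Real.rpow_add hka, Real.rpow_one]
  rw [e2, e1, e3]
  have hk' : lam2*k*r = lam1/2 := by rw [hkdef]; field_simp
  set X := (k*a) ^ (-(1/(r+1)) : ℝ) with hX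
  have e4 : lam1/2*(a*X) + lam2*(k*a*X) = ((r+1)*lam2)*(k*a*X) := by
    rw [hkdef]
    field_simp
  rw [e4, show ((r+1)*lam2)*(k*a*X) = ((r+1)*lam2)*((k*a)*X) by ring, ← e3,
    Real.mul_rpow hk.le ha.le, hlamr, ← const_id2 hr h1 h2]
  ring

lemma jensen_sum {m : ℕ} {s : ℝ} (hs0 : 0 < s) (hs1 : s ≤ 1) (w μ : Fin m → ℝ)
    (hw : ∀ i, 0 ≤ w i) (hw1 : ∑ i, w i = 1) (hμ : ∀ i, 0 ≤ μ i) :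
    ∑ i, w i * μ i ^ s ≤ (∑ i, w i * μ i) ^ s := by
  have hp : (1:ℝ) ≤ 1/s := by
    rw [le_div_iff₀ hs0]; linarith
  have key := Real.rpow_arith_mean_le_arith_mean_rpow Finset.univ w (fun i => μ i ^ s)
    (fun i _ => hw i) hw1 (fun i _ => by have := hμ i; positivity) hp
  have e1 : ∀ i, (μ i ^ s) ^ ((1:ℝ)/s) = μ i := by
    intro i
    rw [← Real.rpow_mul (hμ i), mul_one_div, div_self hs0.ne', Real.rpow_one]
  simp only [e1] at key
  have hX : (0:ℝ) ≤ ∑ i, w i * μ i ^ s := by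
    exact Finset.sum_nonneg fun i _ => mul_nonneg (hw i) (Real.rpow_nonneg (hμ i) _)
  calc ∑ i, w i * μ i ^ s
      = ((∑ i, w i * μ i ^ s) ^ ((1:ℝ)/s)) ^ s := by
        rw [← Real.rpow_mul hX, one_div, inv_mul_cancel₀ hs0.ne', Real.rpow_one]
    _ ≤ (∑ i, w i * μ i) ^ s := by
        apply Real.rpow_le_rpow (Real.rpow_nonneg hX _) key hs0.le

lemma trace_mul_diag {m : ℕ} (M : Matrix (Fin m) (Fin m) ℝ) (e : Fin m → ℝ) :
    (M * diagonal e).trace = ∑ j, M j j * e j := by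
  simp [Matrix.trace, Matrix.diag, Matrix.mul_diagonal]


/-- `Wᵀ * W` is Hermitian (symmetric) for a real matrix `W`. -/
lemma isHermitian_transpose_mul {d m : ℕ} (W : Matrix (Fin d) (Fin m) ℝ) :
    (Wᵀ * W).IsHermitian := by
  simpa using Matrix.isHermitian_conjTranspose_mul_self W

/-- The singular values of a real `d × m` matrix `W`: the square roots of the
eigenvalues of the symmetric positive semidefinite matrix `Wᵀ * W`. -/
noncomputable def singVal {d m : ℕ} (W : Matrix (Fin d) (Fin m) ℝ) (i : Fin m) : ℝ :=
  Real.sqrt ((isHermitian_transpose_mul W).eigenvalues i)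

/-- The real power `A ^ p` of a (symmetric) matrix, defined through the spectral
decomposition, i.e. by applying `t ↦ t ^ p` to the eigenvalues (continuous functional
calculus). -/
noncomputable def mpow {m : ℕ} (A : Matrix (Fin m) (Fin m) ℝ) (p : ℝ) :
    Matrix (Fin m) (Fin m) ℝ :=
  cfc (fun t : ℝ => t ^ p) A

lemma lower_bound {d m : ℕ} (W : Matrix (Fin d) (Fin m) ℝ) {r lam1 lam2 lamr : ℝ}
    (hr : 0 < r) (h1 : 0 < lam1) (h2 : 0 < lam2)
    (hlamr : lamr = (1 + 1 / r) * (lam1 ^ r * lam2 * r / (2 : ℝ) ^ r) ^ (1 / (r + 1)))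
    {Ω : Matrix (Fin m) (Fin m) ℝ} (hΩ : Ω.PosDef) :
    lamr * (mpow (Wᵀ * W) (r/(r+1))).trace
      ≤ (lam1 / 2) * (W * Ω⁻¹ * Wᵀ).trace + lam2 * (mpow Ω r).trace := by
  have hr1 : (0:ℝ) < r + 1 := by linarith
  have hs0 : 0 < r/(r+1) := by positivity
  have hs1 : r/(r+1) ≤ 1 := by rw [div_le_one hr1]; linarith
  have hA := isHermitian_transpose_mul W
  have hAps : (Wᵀ * W).PosSemidef := by
    rw [← W.conjTranspose_eq_transpose_of_trivial]
    exact Matrix.posSemidef_conjTranspose_mul_self W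
  set A := Wᵀ * W with hAdef
  set μ := hA.eigenvalues with hμdef
  have hμ : ∀ i, 0 ≤ μ i := fun i => hAps.eigenvalues_nonneg i
  have hH := hΩ.isHermitian
  set c := hH.eigenvalues with hcdef
  have hc : ∀ j, 0 < c j := fun j => hΩ.eigenvalues_pos j
  set U := (hA.eigenvectorUnitary : Matrix (Fin m) (Fin m) ℝ) with hUdef
  set V := (hH.eigenvectorUnitary : Matrix (Fin m) (Fin m) ℝ) with hVdef
  set Q := Vᴴ * U with hQdef
  have hQ1 : Q * Qᴴ = 1 := by
    rw [hQdef, conjTranspose_mul, conjTranspose_conjTranspose, mul_assoc,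
      ← mul_assoc U, unitary_mul_star hA, one_mul, unitary_star_mul hH]
  have hQ2 : Qᴴ * Q = 1 := by
    rw [hQdef, conjTranspose_mul, conjTranspose_conjTranspose, mul_assoc,
      ← mul_assoc V, unitary_mul_star hH, one_mul, unitary_star_mul hA]
  set w : Fin m → Fin m → ℝ := fun j i => (Q j i)^2 with hwdef
  have hrow : ∀ j, ∑ i, w j i = 1 := by
    intro j
    have := congrArg (fun M => M j j) hQ1
    simpa [Matrix.mul_apply, Matrix.one_apply, Matrix.conjTranspose_apply, hwdef, sq] using this
  have hcol : ∀ i, ∑ j, w j i = 1 := by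
    intro i
    have := congrArg (fun M => M i i) hQ2
    simpa [Matrix.mul_apply, Matrix.one_apply, Matrix.conjTranspose_apply, hwdef, sq] using this
  set a : Fin m → ℝ := fun j => ∑ i, μ i * w j i with hadef
  have ha : ∀ j, 0 ≤ a j := fun j =>
    Finset.sum_nonneg fun i _ => mul_nonneg (hμ i) (sq_nonneg _)
  -- V-conjugated A entries
  have hVAV : ∀ j, (Vᴴ * A * V) j j = a j := by
    intro j
    have hrepr : Vᴴ * A * V = Q * diagonal μ * Qᴴ := by
      conv_lhs => rw [real_spectral hA]
      rw [hQdef, conjTranspose_mul, conjTranspose_conjTranspose]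
      noncomm_ring
    rw [hrepr, entry_conj_diag]
  -- trace identities
  have hΩinv : Ω⁻¹ = V * diagonal (fun j => (c j)⁻¹) * Vᴴ := by
    conv_lhs => rw [real_spectral hH]
    exact inv_conj_diag V (unitary_star_mul hH) (unitary_mul_star hH) c fun j => (hc j).ne'
  have ht1 : (W * Ω⁻¹ * Wᵀ).trace = ∑ j, a j * (c j)⁻¹ := by
    rw [trace_mul_cycle, ← hAdef, hΩinv,
      show A * (V * diagonal (fun j => (c j)⁻¹) * Vᴴ)
        = (A * V) * diagonal (fun j => (c j)⁻¹) * Vᴴ by noncomm_ring,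
      trace_mul_cycle, ← mul_assoc, trace_mul_diag]
    exact Finset.sum_congr rfl fun j _ => by rw [hVAV j]
  have ht2 : (mpow Ω r).trace = ∑ j, (c j) ^ r := trace_cfc' hH (fun t => t ^ r)
  have ht3 : (mpow A (r/(r+1))).trace = ∑ i, μ i ^ (r/(r+1)) :=
    trace_cfc' hA (fun t => t ^ (r/(r+1)))
  have hj : ∑ i, μ i ^ (r/(r+1)) ≤ ∑ j, a j ^ (r/(r+1)) := by
    calc ∑ i, μ i ^ (r/(r+1)) = ∑ i, (∑ j, w j i) * μ i ^ (r/(r+1)) := by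
          refine Finset.sum_congr rfl fun i _ => ?_
          rw [hcol i, one_mul]
      _ = ∑ i, ∑ j, w j i * μ i ^ (r/(r+1)) := by
          refine Finset.sum_congr rfl fun i _ => ?_
          rw [Finset.sum_mul]
      _ = ∑ j, ∑ i, w j i * μ i ^ (r/(r+1)) := Finset.sum_comm
      _ ≤ ∑ j, a j ^ (r/(r+1)) := by
          refine Finset.sum_le_sum fun j _ => ?_
          have := jensen_sum hs0 hs1 (w j) μ (fun i => sq_nonneg _) (hrow j) hμ
          have hswap : ∑ i, w j i * μ i = a j := by
            rw [hadef]
            exact Finset.sum_congr rfl fun i _ => mul_comm _ _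
          rwa [hswap] at this
  have hlamr0 : 0 ≤ lamr := by rw [hlamr]; positivity
  calc lamr * (mpow A (r/(r+1))).trace = lamr * ∑ i, μ i ^ (r/(r+1)) := by rw [ht3]
    _ ≤ lamr * ∑ j, a j ^ (r/(r+1)) := mul_le_mul_of_nonneg_left hj hlamr0
    _ = ∑ j, lamr * a j ^ (r/(r+1)) := Finset.mul_sum _ _ _
    _ ≤ ∑ j, ((lam1 / 2) * (a j / c j) + lam2 * (c j) ^ r) :=
        Finset.sum_le_sum fun j _ => scalar_bound hr h1 h2 hlamr (ha j) (hc j)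
    _ = (lam1 / 2) * (∑ j, a j * (c j)⁻¹) + lam2 * ∑ j, (c j) ^ r := by
        rw [Finset.sum_add_distrib, ← Finset.mul_sum, ← Finset.mul_sum]
        simp [div_eq_mul_inv]
    _ = (lam1 / 2) * (W * Ω⁻¹ * Wᵀ).trace + lam2 * (mpow Ω r).trace := by
        rw [ht1, ht2]

lemma upper_piece {d m : ℕ} (W : Matrix (Fin d) (Fin m) ℝ) {r lam1 lam2 lamr : ℝ}
    (hr : 0 < r) (h1 : 0 < lam1) (h2 : 0 < lam2)
    (hlamr : lamr = (1 + 1 / r) * (lam1 ^ r * lam2 * r / (2 : ℝ) ^ r) ^ (1 / (r + 1)))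
    {δ : ℝ} (hδ : 0 < δ) :
    ∃ Ω : Matrix (Fin m) (Fin m) ℝ, Ω.PosDef ∧
      (lam1 / 2) * (W * Ω⁻¹ * Wᵀ).trace + lam2 * (mpow Ω r).trace
        ≤ lamr * ∑ i, ((isHermitian_transpose_mul W).eigenvalues i + δ) ^ (r/(r+1)) := by
  have hr1 : (0:ℝ) < r + 1 := by linarith
  have hA := isHermitian_transpose_mul W
  have hAps : (Wᵀ * W).PosSemidef := by
    rw [← W.conjTranspose_eq_transpose_of_trivial]
    exact Matrix.posSemidef_conjTranspose_mul_self W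
  set A := Wᵀ * W with hAdef
  set μ := hA.eigenvalues with hμdef
  have hμ : ∀ i, 0 ≤ μ i := fun i => hAps.eigenvalues_nonneg i
  set g : ℝ → ℝ := fun t => (lam1/(2*lam2*r)*(t+δ)) ^ ((1:ℝ)/(r+1)) with hgdef
  have hg : ∀ i, 0 < g (μ i) := by
    intro i
    have h' := hμ i
    rw [hgdef]
    have : 0 < μ i + δ := by linarith
    positivity
  set U := (hA.eigenvectorUnitary : Matrix (Fin m) (Fin m) ℝ) with hUdef
  refine ⟨U * diagonal (fun i => g (μ i)) * Uᴴ,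
    posDef_conj_diag U (unitary_mul_star hA) _ hg, ?_⟩
  set Ω := U * diagonal (fun i => g (μ i)) * Uᴴ with hΩdef
  have hΩcfc : Ω = cfc g A := by rw [real_cfc hA g]; rfl
  have hΩinv : Ω⁻¹ = U * diagonal (fun i => (g (μ i))⁻¹) * Uᴴ :=
    inv_conj_diag U (unitary_star_mul hA) (unitary_mul_star hA) _ fun i => (hg i).ne'
  have ht1 : (W * Ω⁻¹ * Wᵀ).trace = ∑ i, μ i * (g (μ i))⁻¹ := by
    rw [trace_mul_cycle, ← hAdef, hΩinv]
    conv_lhs => rw [real_spectral hA, ← hμdef]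
    rw [conj_mul_conj U (unitary_star_mul hA), trace_conj_diag U (unitary_star_mul hA)]
  have hA' : IsSelfAdjoint A := hA
  have ht2 : (mpow Ω r).trace = ∑ i, (g (μ i)) ^ r := by
    have hcomp : cfc ((fun t : ℝ => t ^ r) ∘ g) A = cfc (fun t : ℝ => t ^ r) (cfc g A) :=
      cfc_comp (fun t : ℝ => t ^ r) g A hA'
        (((Matrix.finite_real_spectrum (A := A)).image g).continuousOn _)
        ((Matrix.finite_real_spectrum (A := A)).continuousOn _)
    have : mpow Ω r = cfc ((fun t : ℝ => t ^ r) ∘ g) A := by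
      rw [hcomp, ← hΩcfc]; rfl
    rw [this]
    exact trace_cfc' hA _
  have key : ∀ i, (lam1/2) * (μ i * (g (μ i))⁻¹) + lam2 * (g (μ i))^r
      ≤ lamr * (μ i + δ)^(r/(r+1)) := by
    intro i
    have hai : 0 < μ i + δ := by have := hμ i; linarith
    have heq := scalar_eq hr h1 h2 hlamr hai
    calc (lam1/2) * (μ i * (g (μ i))⁻¹) + lam2 * (g (μ i))^r
        ≤ (lam1/2) * ((μ i + δ) * (g (μ i))⁻¹) + lam2 * (g (μ i))^r := by
          gcongr
          linarith
      _ = lamr * (μ i + δ)^(r/(r+1)) := by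
          rw [← heq, hgdef]
          simp [div_eq_mul_inv]
  calc (lam1 / 2) * (W * Ω⁻¹ * Wᵀ).trace + lam2 * (mpow Ω r).trace
      = ∑ i, ((lam1/2) * (μ i * (g (μ i))⁻¹) + lam2 * (g (μ i))^r) := by
        rw [ht1, ht2, Finset.sum_add_distrib, ← Finset.mul_sum, ← Finset.mul_sum]
    _ ≤ ∑ i, lamr * (μ i + δ)^(r/(r+1)) := Finset.sum_le_sum fun i _ => key i
    _ = lamr * ∑ i, (μ i + δ)^(r/(r+1)) := (Finset.mul_sum _ _ _).symm

/-- the infimum over symmetric positive definite Ω of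
(λ₁/2)·tr(W Ω⁻¹ Wᵀ) + λ₂·tr(Ω^r) equals λᵣ · tr((WᵀW)^{r/(r+1)}), which equals
λᵣ · Σᵢ σᵢ(W)^{2r/(r+1)}. -/
theorem stmt0 {d m : ℕ} (W : Matrix (Fin d) (Fin m) ℝ) (r lam1 lam2 : ℝ)
    (hr : 0 < r) (h1 : 0 < lam1) (h2 : 0 < lam2) (lamr : ℝ)
    (hlamr : lamr = (1 + 1 / r) * (lam1 ^ r * lam2 * r / (2 : ℝ) ^ r) ^ (1 / (r + 1))) :
    sInf {v : ℝ | ∃ Ω : Matrix (Fin m) (Fin m) ℝ, Ω.PosDef ∧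
        v = (lam1 / 2) * (W * Ω⁻¹ * Wᵀ).trace + lam2 * (mpow Ω r).trace}
      = lamr * (mpow (Wᵀ * W) (r / (r + 1))).trace ∧
    lamr * (mpow (Wᵀ * W) (r / (r + 1))).trace
      = lamr * ∑ i, singVal W i ^ (2 * r / (r + 1)) := by
  have hr1 : (0:ℝ) < r + 1 := by linarith
  have hs0 : 0 < r/(r+1) := by positivity
  have hA := isHermitian_transpose_mul W
  have hAps : (Wᵀ * W).PosSemidef := by
    rw [← W.conjTranspose_eq_transpose_of_trivial]
    exact Matrix.posSemidef_conjTranspose_mul_self W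
  have hμ : ∀ i, 0 ≤ hA.eigenvalues i := fun i => hAps.eigenvalues_nonneg i
  have ht3 : (mpow (Wᵀ * W) (r / (r + 1))).trace = ∑ i, hA.eigenvalues i ^ (r/(r+1)) :=
    trace_cfc' hA _
  constructor
  · set S := {v : ℝ | ∃ Ω : Matrix (Fin m) (Fin m) ℝ, Ω.PosDef ∧
        v = (lam1 / 2) * (W * Ω⁻¹ * Wᵀ).trace + lam2 * (mpow Ω r).trace} with hSdef
    have hne : S.Nonempty :=
      ⟨(lam1 / 2) * (W * (1 : Matrix (Fin m) (Fin m) ℝ)⁻¹ * Wᵀ).trace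
          + lam2 * (mpow (1 : Matrix (Fin m) (Fin m) ℝ) r).trace,
        ⟨1, Matrix.PosDef.one, rfl⟩⟩
    have hlb : ∀ v ∈ S, lamr * (mpow (Wᵀ * W) (r / (r + 1))).trace ≤ v := by
      rintro v ⟨Ω, hΩ, rfl⟩
      exact lower_bound W hr h1 h2 hlamr hΩ
    have hbdd : BddBelow S := ⟨_, hlb⟩
    apply le_antisymm
    · apply le_of_forall_pos_le_add
      intro ε hε
      have hcont : Filter.Tendsto
          (fun δ : ℝ => lamr * ∑ i, (hA.eigenvalues i + δ) ^ (r/(r+1))) (nhds 0)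
          (nhds (lamr * ∑ i, (hA.eigenvalues i + 0) ^ (r/(r+1)))) := by
        apply Filter.Tendsto.const_mul
        apply tendsto_finset_sum
        intro i _
        have hc1 : ContinuousAt (fun x : ℝ => x ^ (r/(r+1))) (hA.eigenvalues i + 0) :=
          Real.continuousAt_rpow_const _ _ (Or.inr hs0.le)
        exact (hc1.comp ((continuous_const.add continuous_id).continuousAt)).tendsto
      simp only [add_zero] at hcont
      have hlt := hcont.eventually_lt_const
        (show lamr * ∑ i, hA.eigenvalues i ^ (r/(r+1))
            < lamr * ∑ i, hA.eigenvalues i ^ (r/(r+1)) + ε by linarith)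
      obtain ⟨δ, hδprop, hδpos⟩ :=
        ((hlt.filter_mono (nhdsWithin_le_nhds (s := Set.Ioi (0:ℝ)))).and
          self_mem_nhdsWithin).exists
      obtain ⟨Ω, hΩpd, hval⟩ := upper_piece W hr h1 h2 hlamr hδpos
      calc sInf S ≤ (lam1 / 2) * (W * Ω⁻¹ * Wᵀ).trace + lam2 * (mpow Ω r).trace :=
            csInf_le hbdd ⟨Ω, hΩpd, rfl⟩
        _ ≤ lamr * ∑ i, (hA.eigenvalues i + δ) ^ (r/(r+1)) := hval
        _ ≤ lamr * (mpow (Wᵀ * W) (r / (r + 1))).trace + ε := by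
            rw [ht3]; exact hδprop.le
    · exact le_csInf hne hlb
  · rw [ht3]
    congr 1
    refine Finset.sum_congr rfl fun i _ => ?_
    rw [singVal, Real.sqrt_eq_rpow, ← Real.rpow_mul (hμ i)]
    congr 1
    ring
end

section
/- Let Φ be an m×m real symmetric matrix with smallest eigenvalue κ_min, and let ρ < 0. Then the minimum, over all m×m real symmetric positive semidefinite matrices Ω with tr(Ω) = 1, of ρ·tr(Ω²) + tr(ΦΩ) equals ρ + κ_min, and it is attained at Ω = u·uᵀ for any unit eigenvector u of Φ with eigenvalue κ_min. -/
open Matrix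

section Aux

lemma aux_vecMulVec_posSemidef {m : ℕ} (u : Fin m → ℝ) :
    (Matrix.vecMulVec u u).PosSemidef := by
  rw [vecMulVec_eq Unit u u]
  have h : (replicateRow Unit u)ᴴ = replicateCol Unit u := by simp
  rw [← h]
  exact posSemidef_conjTranspose_mul_self _

lemma aux_vecMulVec_trace {m : ℕ} (u : Fin m → ℝ) (hu : (∑ i, u i ^ 2) = 1) :
    (Matrix.vecMulVec u u).trace = 1 := by
  simp only [trace, diag, vecMulVec_apply, ← pow_two]
  exact hu

lemma aux_vecMulVec_sq {m : ℕ} (u : Fin m → ℝ) (hu : (∑ i, u i ^ 2) = 1) :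
    Matrix.vecMulVec u u * Matrix.vecMulVec u u = Matrix.vecMulVec u u := by
  ext i j
  simp only [mul_apply, vecMulVec_apply]
  have h : ∀ k, u i * u k * (u k * u j) = (u i * u j) * u k ^ 2 := fun k => by ring
  simp only [h, ← Finset.mul_sum, hu, mul_one]

lemma aux_trace_phi_vecMulVec {m : ℕ} (Φ : Matrix (Fin m) (Fin m) ℝ) (κ : ℝ) (u : Fin m → ℝ)
    (hu : (∑ i, u i ^ 2) = 1) (hv : Φ.mulVec u = κ • u) :
    (Φ * Matrix.vecMulVec u u).trace = κ := by
  have h : ∀ i, (Φ * Matrix.vecMulVec u u) i i = (Φ.mulVec u i) * u i := by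
    intro i
    simp only [mul_apply, vecMulVec_apply, mulVec, dotProduct, Finset.sum_mul]
    exact Finset.sum_congr rfl fun k _ => by ring
  simp only [trace, diag, h, hv, Pi.smul_apply, smul_eq_mul, mul_assoc, ← Finset.mul_sum,
    ← pow_two, hu, mul_one]

lemma aux_trace_eq {m : ℕ} {A : Matrix (Fin m) (Fin m) ℝ} (hA : A.IsHermitian) :
    A.trace = ∑ i, hA.eigenvalues i := by
  have h1 : star (hA.eigenvectorUnitary : Matrix (Fin m) (Fin m) ℝ) *
      (hA.eigenvectorUnitary : Matrix (Fin m) (Fin m) ℝ) = 1 :=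
    mem_unitaryGroup_iff'.mp (hA.eigenvectorUnitary).2
  conv_lhs => rw [hA.spectral_theorem, Unitary.conjStarAlgAut_apply]
  rw [trace_mul_cycle, h1, Matrix.one_mul, trace_diagonal]
  simp

lemma aux_trace_sq {m : ℕ} {A : Matrix (Fin m) (Fin m) ℝ} (hA : A.IsHermitian) :
    (A * A).trace = ∑ i, hA.eigenvalues i ^ 2 := by
  set V : Matrix (Fin m) (Fin m) ℝ := (hA.eigenvectorUnitary : Matrix (Fin m) (Fin m) ℝ)
  have h1 : star V * V = 1 := mem_unitaryGroup_iff'.mp (hA.eigenvectorUnitary).2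
  set D : Matrix (Fin m) (Fin m) ℝ := diagonal (RCLike.ofReal ∘ hA.eigenvalues)
  have key : A * A = V * (D * D) * star V := by
    conv_lhs => rw [hA.spectral_theorem, Unitary.conjStarAlgAut_apply]
    rw [Matrix.mul_assoc (V * D) (star V) (V * D * star V),
      ← Matrix.mul_assoc (star V) (V * D) (star V), ← Matrix.mul_assoc (star V) V D, h1,
      Matrix.one_mul, ← Matrix.mul_assoc, ← Matrix.mul_assoc]
  rw [key, trace_mul_cycle, h1, Matrix.one_mul, diagonal_mul_diagonal, trace_diagonal]
  simp [pow_two]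

lemma aux_diag_nonneg {m : ℕ} {A : Matrix (Fin m) (Fin m) ℝ} (hA : A.PosSemidef) (i : Fin m) :
    0 ≤ A i i := by
  exact hA.diag_nonneg

lemma aux_trace_phi_ge {m : ℕ} {Φ Ω : Matrix (Fin m) (Fin m) ℝ} (hΦ : Φ.IsHermitian)
    (hΩ : Ω.PosSemidef) (htr : Ω.trace = 1) (κmin : ℝ)
    (hlb : ∀ i, κmin ≤ hΦ.eigenvalues i) : κmin ≤ (Φ * Ω).trace := by
  set V : Matrix (Fin m) (Fin m) ℝ := (hΦ.eigenvectorUnitary : Matrix (Fin m) (Fin m) ℝ)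
  have h1 : star V * V = 1 := mem_unitaryGroup_iff'.mp (hΦ.eigenvectorUnitary).2
  have h2 : V * star V = 1 := mem_unitaryGroup_iff.mp (hΦ.eigenvectorUnitary).2
  set D : Matrix (Fin m) (Fin m) ℝ := diagonal (RCLike.ofReal ∘ hΦ.eigenvalues)
  set Ω' : Matrix (Fin m) (Fin m) ℝ := star V * Ω * V with hΩ'def
  have hΩ' : Ω'.PosSemidef := by
    have := hΩ.conjTranspose_mul_mul_same V
    rw [hΩ'def, Matrix.star_eq_conjTranspose]; exact this
  have htr' : Ω'.trace = 1 := by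
    rw [hΩ'def, trace_mul_cycle, h2, Matrix.one_mul, htr]
  have hkey : (Φ * Ω).trace = ∑ i, hΦ.eigenvalues i * Ω' i i := by
    conv_lhs => rw [hΦ.spectral_theorem, Unitary.conjStarAlgAut_apply]
    rw [Matrix.mul_assoc (V * D) (star V) Ω, trace_mul_cycle V D (star V * Ω),
      trace_mul_comm, Matrix.mul_assoc, ← Matrix.mul_assoc (star V) Ω V, ← hΩ'def]
    simp [Matrix.trace, Matrix.diag, diagonal_mul, Function.comp, D]
  rw [hkey]
  calc κmin = ∑ i, κmin * Ω' i i := by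
        have hsum : ∑ i, Ω' i i = 1 := by simpa [Matrix.trace, Matrix.diag] using htr'
        rw [← Finset.mul_sum, hsum, mul_one]
    _ ≤ ∑ i, hΦ.eigenvalues i * Ω' i i :=
        Finset.sum_le_sum fun i _ => mul_le_mul_of_nonneg_right (hlb i) (aux_diag_nonneg hΩ' i)

lemma aux_eigenvector_norm {m : ℕ} {Φ : Matrix (Fin m) (Fin m) ℝ} (hΦ : Φ.IsHermitian)
    (i : Fin m) : ∑ j, (hΦ.eigenvectorBasis i) j ^ 2 = 1 := by
  have h := hΦ.eigenvectorBasis.orthonormal.1 i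
  rw [EuclideanSpace.norm_eq] at h
  have h2 : ∑ j, ‖(hΦ.eigenvectorBasis i) j‖ ^ 2 = 1 := by
    rw [← Real.sqrt_eq_one]; exact h
  simpa [Real.norm_eq_abs, sq_abs] using h2

end Aux

/-- for symmetric Φ with smallest eigenvalue κmin and ρ < 0, the minimum of
ρ·tr(Ω²) + tr(ΦΩ) over symmetric PSD Ω with tr(Ω) = 1, equals ρ + κmin, attained at
Ω = u·uᵀ for any unit eigenvector u of Φ with eigenvalue κmin. -/
theorem stmt8 {m : ℕ} (hm : 0 < m) (Φ : Matrix (Fin m) (Fin m) ℝ) (hΦ : Φ.IsHermitian)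
    (ρ : ℝ) (hρ : ρ < 0)
    (κmin : ℝ) (hκ : IsLeast (Set.range hΦ.eigenvalues) κmin) :
    sInf {v : ℝ | ∃ Ω : Matrix (Fin m) (Fin m) ℝ, Ω.PosSemidef ∧ Ω.trace = 1 ∧
        v = ρ * (Ω * Ω).trace + (Φ * Ω).trace} = ρ + κmin ∧
    ∀ u : Fin m → ℝ, (∑ i, u i ^ 2) = 1 → Φ.mulVec u = κmin • u →
      (Matrix.vecMulVec u u).PosSemidef ∧ (Matrix.vecMulVec u u).trace = 1 ∧
      ρ * ((Matrix.vecMulVec u u) * (Matrix.vecMulVec u u)).trace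
          + (Φ * Matrix.vecMulVec u u).trace = ρ + κmin := by
  have hlb : ∀ i, κmin ≤ hΦ.eigenvalues i := fun i => hκ.2 ⟨i, rfl⟩
  -- part 2
  have part2 : ∀ u : Fin m → ℝ, (∑ i, u i ^ 2) = 1 → Φ.mulVec u = κmin • u →
      (Matrix.vecMulVec u u).PosSemidef ∧ (Matrix.vecMulVec u u).trace = 1 ∧
      ρ * ((Matrix.vecMulVec u u) * (Matrix.vecMulVec u u)).trace
          + (Φ * Matrix.vecMulVec u u).trace = ρ + κmin := by
    intro u hu hv
    refine ⟨aux_vecMulVec_posSemidef u, aux_vecMulVec_trace u hu, ?_⟩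
    rw [aux_vecMulVec_sq u hu, aux_vecMulVec_trace u hu, aux_trace_phi_vecMulVec Φ κmin u hu hv,
      mul_one]
  refine ⟨?_, part2⟩
  -- lower bound
  have lb : ∀ v ∈ {v : ℝ | ∃ Ω : Matrix (Fin m) (Fin m) ℝ, Ω.PosSemidef ∧ Ω.trace = 1 ∧
      v = ρ * (Ω * Ω).trace + (Φ * Ω).trace}, ρ + κmin ≤ v := by
    rintro v ⟨Ω, hΩ, htr, rfl⟩
    have hH := hΩ.isHermitian
    have hnn : ∀ i, 0 ≤ hH.eigenvalues i := hΩ.eigenvalues_nonneg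
    have hsum : ∑ i, hH.eigenvalues i = 1 := by rw [← aux_trace_eq hH, htr]
    have hle1 : ∀ i, hH.eigenvalues i ≤ 1 := by
      intro i
      rw [← hsum]
      exact Finset.single_le_sum (fun j _ => hnn j) (Finset.mem_univ i)
    have htrsq : (Ω * Ω).trace ≤ 1 := by
      rw [aux_trace_sq hH, ← hsum]
      exact Finset.sum_le_sum fun i _ => by nlinarith [hnn i, hle1 i]
    have h1 : ρ ≤ ρ * (Ω * Ω).trace := by nlinarith
    have h2 : κmin ≤ (Φ * Ω).trace := aux_trace_phi_ge hΦ hΩ htr κmin hlb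
    linarith
  -- membership
  obtain ⟨i, hi⟩ := hκ.1
  set u : Fin m → ℝ := ⇑(hΦ.eigenvectorBasis i) with hudef
  have hu : (∑ j, u j ^ 2) = 1 := aux_eigenvector_norm hΦ i
  have hv : Φ.mulVec u = κmin • u := by
    rw [hudef, hΦ.mulVec_eigenvectorBasis, hi]
  obtain ⟨hpsd, htr1, hval⟩ := part2 u hu hv
  have hmem : ρ + κmin ∈ {v : ℝ | ∃ Ω : Matrix (Fin m) (Fin m) ℝ, Ω.PosSemidef ∧ Ω.trace = 1 ∧
      v = ρ * (Ω * Ω).trace + (Φ * Ω).trace} :=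
    ⟨Matrix.vecMulVec u u, hpsd, htr1, hval.symm⟩
  exact le_antisymm (csInf_le ⟨ρ + κmin, lb⟩ hmem) (le_csInf ⟨ρ + κmin, hmem⟩ lb)
end

section
/- Let ρ > 0 and κ ∈ ℝ^m. Then the minimum, over μ ∈ ℝ^m with μᵢ ≥ 0 for all i and Σᵢ μᵢ = 1, of ρ·‖μ‖₂² + μᵀκ equals the supremum over τ ∈ ℝ of −τ − (1/(4ρ))·Σᵢ max(0, −(κᵢ + τ))²; equivalently, it equals −(1/(4ρ)) times the infimum over τ ∈ ℝ of 4ρτ + Σ_{i : τ ≤ −κᵢ} (τ + κᵢ)². -/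
open Finset

/-- strong duality for the simplex quadratic program: for ρ > 0,
min_{μ ≥ 0, Σμ = 1} ρ‖μ‖₂² + μᵀκ = sup_τ (−τ − (1/(4ρ)) Σᵢ max(0, −(κᵢ+τ))²)
= −(1/(4ρ)) · inf_τ (4ρτ + Σ_{i : τ ≤ −κᵢ} (τ+κᵢ)²). -/
theorem stmt12 {m : ℕ} (hm : 0 < m) (ρ : ℝ) (hρ : 0 < ρ) (κ : Fin m → ℝ) :
    sInf {v : ℝ | ∃ μ : Fin m → ℝ, (∀ i, 0 ≤ μ i) ∧ (∑ i, μ i) = 1 ∧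
        v = ρ * (∑ i, μ i ^ 2) + ∑ i, μ i * κ i}
      = sSup {v : ℝ | ∃ τ : ℝ,
          v = -τ - (1 / (4 * ρ)) * ∑ i, max 0 (-(κ i + τ)) ^ 2} ∧
    sInf {v : ℝ | ∃ μ : Fin m → ℝ, (∀ i, 0 ≤ μ i) ∧ (∑ i, μ i) = 1 ∧
        v = ρ * (∑ i, μ i ^ 2) + ∑ i, μ i * κ i}
      = -(1 / (4 * ρ)) * sInf {v : ℝ | ∃ τ : ℝ,
          v = 4 * ρ * τ + ∑ i ∈ Finset.univ.filter (fun i => τ ≤ -κ i), (τ + κ i) ^ 2} := by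
  have hne : (Finset.univ : Finset (Fin m)).Nonempty := ⟨⟨0, hm⟩, mem_univ _⟩
  -- key identity: primal value minus dual value is a sum of per-coordinate terms
  have expand : ∀ τ : ℝ, ∀ μ : Fin m → ℝ, (∑ i, μ i) = 1 →
      ρ * (∑ i, μ i ^ 2) + ∑ i, μ i * κ i
        - (-τ - (1 / (4 * ρ)) * ∑ i, max 0 (-(κ i + τ)) ^ 2)
        = ∑ i, (ρ * μ i ^ 2 + μ i * (κ i + τ)
            + (1 / (4 * ρ)) * max 0 (-(κ i + τ)) ^ 2) := by
    intro τ μ hs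
    have h2 : ∑ i, μ i * (κ i + τ) = ∑ i, μ i * κ i + τ := by
      simp only [mul_add]
      rw [Finset.sum_add_distrib, ← Finset.sum_mul, hs, one_mul]
    rw [Finset.sum_add_distrib, Finset.sum_add_distrib, ← Finset.mul_sum, ← Finset.mul_sum, h2]
    ring
  -- weak duality
  have weak : ∀ τ : ℝ, ∀ μ : Fin m → ℝ, (∀ i, 0 ≤ μ i) → (∑ i, μ i) = 1 →
      -τ - (1 / (4 * ρ)) * ∑ i, max 0 (-(κ i + τ)) ^ 2
        ≤ ρ * (∑ i, μ i ^ 2) + ∑ i, μ i * κ i := by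
    intro τ μ hμ hs
    have h0 : 0 ≤ ρ * (∑ i, μ i ^ 2) + ∑ i, μ i * κ i
        - (-τ - (1 / (4 * ρ)) * ∑ i, max 0 (-(κ i + τ)) ^ 2) := by
      rw [expand τ μ hs]
      apply Finset.sum_nonneg
      intro i _
      rcases le_or_gt 0 (κ i + τ) with h | h
      · rw [max_eq_left (by linarith)]
        have := mul_nonneg (hμ i) h
        nlinarith [sq_nonneg (μ i)]
      · rw [max_eq_right (by linarith)]
        have key : ρ * μ i ^ 2 + μ i * (κ i + τ) + (1 / (4 * ρ)) * (-(κ i + τ)) ^ 2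
            = (2 * ρ * μ i + (κ i + τ)) ^ 2 / (4 * ρ) := by
          field_simp
          ring
        rw [key]
        positivity
    linarith
  -- find τs with ∑ max 0 (-(κ i + τs)) = 2ρ, by IVT
  set b := Finset.univ.sup' hne κ with hb
  set a := Finset.univ.inf' hne κ with ha
  have hcont : Continuous (fun τ : ℝ => ∑ i, max 0 (-(κ i + τ))) := by
    apply continuous_finset_sum
    intro i _
    exact continuous_const.max (by fun_prop)
  have hab : a ≤ b := by
    obtain ⟨i, _⟩ := hne
    exact le_trans (Finset.inf'_le κ (mem_univ i)) (Finset.le_sup' κ (mem_univ i))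
  have hlohi : -b - 2 * ρ ≤ -a := by linarith
  have hhi0 : ∑ i, max 0 (-(κ i + -a)) = 0 := by
    apply Finset.sum_eq_zero
    intro i _
    have : a ≤ κ i := Finset.inf'_le κ (mem_univ i)
    exact max_eq_left (by linarith)
  have hlo2 : 2 * ρ ≤ ∑ i, max 0 (-(κ i + (-b - 2 * ρ))) := by
    have h1 : ∀ i ∈ (Finset.univ : Finset (Fin m)), (2 * ρ : ℝ) ≤ max 0 (-(κ i + (-b - 2 * ρ))) := by
      intro i _
      have h2 : κ i ≤ b := Finset.le_sup' κ (mem_univ i)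
      have h3 : 2 * ρ ≤ -(κ i + (-b - 2 * ρ)) := by linarith
      exact le_trans h3 (le_max_right _ _)
    calc (2 * ρ : ℝ) = 1 * (2 * ρ) := (one_mul _).symm
      _ ≤ (m : ℝ) * (2 * ρ) := by
          apply mul_le_mul_of_nonneg_right _ (by linarith)
          exact_mod_cast Nat.one_le_cast.mpr hm
      _ = ∑ _i : Fin m, (2 * ρ : ℝ) := by
          rw [Finset.sum_const, Finset.card_univ, Fintype.card_fin, nsmul_eq_mul]
      _ ≤ _ := Finset.sum_le_sum h1
  have le1 : (fun τ : ℝ => ∑ i, max 0 (-(κ i + τ))) (-a) ≤ 2 * ρ := by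
    show ∑ i, max 0 (-(κ i + -a)) ≤ 2 * ρ
    rw [hhi0]; positivity
  have le2 : 2 * ρ ≤ (fun τ : ℝ => ∑ i, max 0 (-(κ i + τ))) (-b - 2 * ρ) := hlo2
  obtain ⟨τs, -, hτs⟩ :=
    intermediate_value_Icc' hlohi hcont.continuousOn (Set.mem_Icc.mpr ⟨le1, le2⟩)
  have hτs2 : ∑ i, max 0 (-(κ i + τs)) = 2 * ρ := hτs
  -- the optimal primal point
  set μs : Fin m → ℝ := fun i => max 0 (-(κ i + τs)) / (2 * ρ) with hμsdef
  have hμs0 : ∀ i, 0 ≤ μs i := fun i => div_nonneg (le_max_left _ _) (by linarith)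
  have hμs1 : ∑ i, μs i = 1 := by
    simp only [hμsdef]
    rw [← Finset.sum_div, hτs2]
    field_simp
  have hterm : ∀ i, ρ * μs i ^ 2 + μs i * (κ i + τs)
      + (1 / (4 * ρ)) * max 0 (-(κ i + τs)) ^ 2 = 0 := by
    intro i
    show ρ * (max 0 (-(κ i + τs)) / (2 * ρ)) ^ 2 + (max 0 (-(κ i + τs)) / (2 * ρ)) * (κ i + τs)
      + (1 / (4 * ρ)) * max 0 (-(κ i + τs)) ^ 2 = 0
    rcases le_or_gt 0 (κ i + τs) with h | h
    · rw [max_eq_left (by linarith)]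
      norm_num
    · rw [max_eq_right (by linarith)]
      field_simp
      ring
  obtain ⟨V, hV⟩ : ∃ V : ℝ, V = -τs - (1 / (4 * ρ)) * ∑ i, max 0 (-(κ i + τs)) ^ 2 := ⟨_, rfl⟩
  have hval : ρ * (∑ i, μs i ^ 2) + ∑ i, μs i * κ i = V := by
    have h2 := expand τs μs hμs1
    rw [Finset.sum_eq_zero (fun i _ => hterm i)] at h2
    rw [hV]
    linarith
  have hPleast : IsLeast {v : ℝ | ∃ μ : Fin m → ℝ, (∀ i, 0 ≤ μ i) ∧ (∑ i, μ i) = 1 ∧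
      v = ρ * (∑ i, μ i ^ 2) + ∑ i, μ i * κ i} V := by
    constructor
    · exact ⟨μs, hμs0, hμs1, hval.symm⟩
    · rintro v ⟨μ, hμ0, hμ1, rfl⟩
      rw [hV]
      exact weak τs μ hμ0 hμ1
  have hDgreatest : IsGreatest {v : ℝ | ∃ τ : ℝ,
      v = -τ - (1 / (4 * ρ)) * ∑ i, max 0 (-(κ i + τ)) ^ 2} V := by
    constructor
    · exact ⟨τs, hV⟩
    · rintro v ⟨τ, rfl⟩
      exact le_trans (weak τ μs hμs0 hμs1) (le_of_eq hval)
  have hfilter : ∀ τ : ℝ, ∑ i ∈ Finset.univ.filter (fun i => τ ≤ -κ i), (τ + κ i) ^ 2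
      = ∑ i, max 0 (-(κ i + τ)) ^ 2 := by
    intro τ
    rw [Finset.sum_filter]
    apply Finset.sum_congr rfl
    intro i _
    rcases le_or_gt τ (-κ i) with h | h
    · rw [if_pos h, max_eq_right (by linarith)]
      ring
    · rw [if_neg (not_le.mpr h), max_eq_left (by linarith)]
      simp
  have hFleast : IsLeast {v : ℝ | ∃ τ : ℝ,
      v = 4 * ρ * τ + ∑ i ∈ Finset.univ.filter (fun i => τ ≤ -κ i), (τ + κ i) ^ 2}
      (-(4 * ρ) * V) := by
    constructor
    · refine ⟨τs, ?_⟩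
      rw [hfilter τs, hV]
      field_simp
      ring
    · rintro v ⟨τ, rfl⟩
      rw [hfilter τ]
      have h1 : -τ - (1 / (4 * ρ)) * ∑ i, max 0 (-(κ i + τ)) ^ 2 ≤ V :=
        le_trans (weak τ μs hμs0 hμs1) (le_of_eq hval)
      have key : (4 * ρ) * (-τ - (1 / (4 * ρ)) * ∑ i, max 0 (-(κ i + τ)) ^ 2)
          = -(4 * ρ) * τ - ∑ i, max 0 (-(κ i + τ)) ^ 2 := by
        field_simp
      have hmul := mul_le_mul_of_nonneg_left h1 (by linarith : (0:ℝ) ≤ 4 * ρ)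
      rw [key] at hmul
      linarith
  have hP : sInf {v : ℝ | ∃ μ : Fin m → ℝ, (∀ i, 0 ≤ μ i) ∧ (∑ i, μ i) = 1 ∧
      v = ρ * (∑ i, μ i ^ 2) + ∑ i, μ i * κ i} = V := hPleast.csInf_eq
  have hD : sSup {v : ℝ | ∃ τ : ℝ,
      v = -τ - (1 / (4 * ρ)) * ∑ i, max 0 (-(κ i + τ)) ^ 2} = V := hDgreatest.csSup_eq
  have hF : sInf {v : ℝ | ∃ τ : ℝ,
      v = 4 * ρ * τ + ∑ i ∈ Finset.univ.filter (fun i => τ ≤ -κ i), (τ + κ i) ^ 2}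
      = -(4 * ρ) * V := hFleast.csInf_eq
  refine ⟨by rw [hP, hD], ?_⟩
  rw [hP, hF]
  field_simp
end

section
/- Let Φ be an m×m real symmetric matrix and ρ > 0. Then there exists a real number φ such that the (unique) minimizer of ρ·tr(Ω²) + tr(ΦΩ) over symmetric positive semidefinite m×m matrices Ω with tr(Ω) = 1 equals the positive part of (φ·I − Φ)/(2ρ), i.e., the matrix obtained from the spectral decomposition of (φ·I − Φ)/(2ρ) by replacing every negative eigenvalue with 0. In particular, this minimizer commutes with Φ. -/
open Matrix

section Stmt17Aux

variable {m : ℕ}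

private lemma stmt17_trace_cfc (Φ : Matrix (Fin m) (Fin m) ℝ) (hΦ : Φ.IsHermitian) (f : ℝ → ℝ) :
    (cfc f Φ).trace = ∑ i, f (hΦ.eigenvalues i) := by
  rw [hΦ.cfc_eq, Matrix.IsHermitian.cfc, Unitary.conjStarAlgAut_apply, Matrix.trace_mul_cycle]
  rw [show (star (hΦ.eigenvectorUnitary : Matrix (Fin m) (Fin m) ℝ)) *
      (hΦ.eigenvectorUnitary : Matrix (Fin m) (Fin m) ℝ) = 1 from hΦ.eigenvectorUnitary.2.1]
  simp [Matrix.trace_diagonal]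

private lemma stmt17_posSemidef_cfc (Φ : Matrix (Fin m) (Fin m) ℝ) (hΦ : Φ.IsHermitian)
    (f : ℝ → ℝ) (hf : ∀ x, 0 ≤ f x) : (cfc f Φ).PosSemidef := by
  rw [hΦ.cfc_eq, Matrix.IsHermitian.cfc]
  have hd : (Matrix.diagonal (RCLike.ofReal ∘ f ∘ hΦ.eigenvalues) :
      Matrix (Fin m) (Fin m) ℝ).PosSemidef :=
    Matrix.posSemidef_diagonal_iff.mpr fun i => hf _
  simpa [Matrix.star_eq_conjTranspose, Matrix.mul_assoc] using
    hd.mul_mul_conjTranspose_same (hΦ.eigenvectorUnitary : Matrix (Fin m) (Fin m) ℝ)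

private lemma stmt17_trace_nonneg {M : Matrix (Fin m) (Fin m) ℝ} (hM : M.PosSemidef) :
    0 ≤ M.trace := by
  rw [Matrix.trace]
  apply Finset.sum_nonneg
  intro i _
  simpa [Matrix.mulVec_single, dotProduct, Pi.single_apply] using hM.diag_nonneg (i := i)

open scoped MatrixOrder in
private lemma stmt17_trace_mul_nonneg {A B : Matrix (Fin m) (Fin m) ℝ}
    (hA : A.PosSemidef) (hB : B.PosSemidef) : 0 ≤ (A * B).trace := by
  have h : A * B = A * (CFC.sqrt B * CFC.sqrt B) := by rw [CFC.sqrt_mul_sqrt_self B hB.nonneg]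
  rw [h, ← Matrix.mul_assoc, Matrix.trace_mul_cycle]
  have hh : CFC.sqrt B * (A * CFC.sqrt B) = (CFC.sqrt B)ᴴ * A * CFC.sqrt B := by
    rw [(CFC.sqrt_nonneg B).posSemidef.1.eq, Matrix.mul_assoc]
  rw [← Matrix.mul_assoc] at hh
  rw [hh]
  exact stmt17_trace_nonneg (hA.conjTranspose_mul_mul_same _)

private lemma stmt17_trace_sq (S : Matrix (Fin m) (Fin m) ℝ) (hS : S.IsHermitian) :
    (S * S).trace = ∑ i, ∑ j, (S i j)^2 := by
  rw [Matrix.trace]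
  congr 1; funext i
  rw [Matrix.diag_apply, Matrix.mul_apply]
  congr 1; funext j
  have : S j i = S i j := by simpa using hS.apply i j
  rw [this, sq]

private lemma stmt17_trace_sq_nonneg (S : Matrix (Fin m) (Fin m) ℝ) (hS : S.IsHermitian) :
    0 ≤ (S * S).trace := by
  rw [stmt17_trace_sq S hS]
  exact Finset.sum_nonneg fun i _ => Finset.sum_nonneg fun j _ => sq_nonneg _

private lemma stmt17_eq_zero_of_trace_sq {S : Matrix (Fin m) (Fin m) ℝ} (hS : S.IsHermitian)
    (h : (S * S).trace = 0) : S = 0 := by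
  rw [stmt17_trace_sq S hS] at h
  ext i j
  have h1 : ∀ i ∈ Finset.univ, (0:ℝ) ≤ ∑ j, (S i j)^2 := fun i _ =>
    Finset.sum_nonneg (fun j _ => sq_nonneg _)
  have h2 := (Finset.sum_eq_zero_iff_of_nonneg h1).mp h i (Finset.mem_univ i)
  have h3 := (Finset.sum_eq_zero_iff_of_nonneg
    (fun j _ => sq_nonneg (S i j))).mp h2 j (Finset.mem_univ j)
  simpa using pow_eq_zero_iff (n := 2) (by norm_num) |>.mp h3

private lemma stmt17_ivt (hm : 0 < m) (E : Fin m → ℝ) (ρ : ℝ) (hρ : 0 < ρ) :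
    ∃ φ : ℝ, ∑ i, max ((2*ρ)⁻¹ * (φ - E i)) 0 = 1 := by
  have hne : (Finset.univ : Finset (Fin m)).Nonempty := ⟨⟨0, hm⟩, Finset.mem_univ _⟩
  set f : ℝ → ℝ := fun φ => ∑ i, max ((2*ρ)⁻¹ * (φ - E i)) 0 with hf
  set a := Finset.univ.inf' hne E with ha
  set b := Finset.univ.sup' hne E + 2*ρ with hb
  have hab : a ≤ b := by
    obtain ⟨i, _, hi⟩ := Finset.exists_mem_eq_inf' hne E
    have h1 : a ≤ E i := hi.le
    have h2 : E i ≤ Finset.univ.sup' hne E := Finset.le_sup' E (Finset.mem_univ i)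
    linarith
  have hcont : Continuous f := by
    apply continuous_finset_sum
    intro i _
    fun_prop
  have hfa : f a = 0 := by
    apply Finset.sum_eq_zero
    intro i _
    have : a ≤ E i := Finset.inf'_le E (Finset.mem_univ i)
    exact max_eq_right (mul_nonpos_of_nonneg_of_nonpos (by positivity) (by linarith))
  have hfb : 1 ≤ f b := by
    obtain ⟨i, _, hi⟩ := Finset.exists_mem_eq_sup' hne E
    have hterm : (1:ℝ) ≤ max ((2*ρ)⁻¹ * (b - E i)) 0 := by
      have : (2*ρ)⁻¹ * (b - E i) = 1 := by
        rw [hb, ← hi]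
        field_simp
        ring
      rw [this]; simp
    calc (1:ℝ) ≤ max ((2*ρ)⁻¹ * (b - E i)) 0 := hterm
      _ ≤ f b := Finset.single_le_sum (f := fun j => max ((2*ρ)⁻¹ * (b - E j)) 0)
            (fun j _ => le_max_right _ 0) (Finset.mem_univ i)
  have := intermediate_value_Icc hab hcont.continuousOn
  obtain ⟨φ, _, hφ⟩ := this ⟨hfa ▸ zero_le_one, hfb⟩
  exact ⟨φ, hφ⟩

end Stmt17Aux

/-- for symmetric Φ and ρ > 0, there exists φ ∈ ℝ such that the unique
minimizer of ρ·tr(Ω²) + tr(ΦΩ) over symmetric PSD Ω with tr(Ω) = 1 is the positive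
part of (φ·I − Φ)/(2ρ) (the map t ↦ max(t,0) applied to the eigenvalues in a spectral
decomposition); in particular this minimizer commutes with Φ. -/
theorem stmt17 {m : ℕ} (hm : 0 < m) (Φ : Matrix (Fin m) (Fin m) ℝ) (hΦ : Φ.IsHermitian)
    (ρ : ℝ) (hρ : 0 < ρ) :
    ∃ φ : ℝ, ∃ P : Matrix (Fin m) (Fin m) ℝ,
      P = cfc (fun t : ℝ => max t 0)
            ((2 * ρ)⁻¹ • (φ • (1 : Matrix (Fin m) (Fin m) ℝ) - Φ)) ∧
      P.PosSemidef ∧ P.trace = 1 ∧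
      (∀ Ω : Matrix (Fin m) (Fin m) ℝ, Ω.PosSemidef → Ω.trace = 1 →
        ρ * (P * P).trace + (Φ * P).trace ≤ ρ * (Ω * Ω).trace + (Φ * Ω).trace) ∧
      (∀ Ω : Matrix (Fin m) (Fin m) ℝ, Ω.PosSemidef → Ω.trace = 1 →
        ρ * (Ω * Ω).trace + (Φ * Ω).trace = ρ * (P * P).trace + (Φ * P).trace → Ω = P) ∧
      P * Φ = Φ * P := by
  have hΦ' : IsSelfAdjoint Φ := hΦ
  obtain ⟨φ, hφ1⟩ := stmt17_ivt hm hΦ.eigenvalues ρ hρ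
  set h : ℝ → ℝ := fun t => max ((2 * ρ)⁻¹ * (φ - t)) 0 with hh_def
  set n : ℝ → ℝ := fun t => max (t - φ) 0 with hn_def
  set P : Matrix (Fin m) (Fin m) ℝ := cfc h Φ with hP_def
  set N : Matrix (Fin m) (Fin m) ℝ := cfc n Φ with hN_def
  have hA : (2 * ρ)⁻¹ • (φ • (1 : Matrix (Fin m) (Fin m) ℝ) - Φ)
        = cfc (fun t : ℝ => (2 * ρ)⁻¹ * (φ - t)) Φ := by
      rw [cfc_const_mul _ _ _ (by fun_prop), cfc_sub _ _ _ (by fun_prop) (by fun_prop),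
        cfc_const _ _, cfc_id' ℝ Φ, Algebra.algebraMap_eq_smul_one]
  have hPeq : P = cfc (fun t : ℝ => max t 0)
      ((2 * ρ)⁻¹ • (φ • (1 : Matrix (Fin m) (Fin m) ℝ) - Φ)) := by
    rw [hA, ← cfc_comp' _ _ _ (by fun_prop) (by fun_prop)]
  have hP : P.PosSemidef := stmt17_posSemidef_cfc Φ hΦ h (fun x => le_max_right _ 0)
  have hPtr : P.trace = 1 := by rw [hP_def, stmt17_trace_cfc Φ hΦ h]; exact hφ1
  have hN : N.PosSemidef := stmt17_posSemidef_cfc Φ hΦ n (fun x => le_max_right _ 0)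
  -- key identity
  have key : (2*ρ) • P + Φ = φ • (1 : Matrix (Fin m) (Fin m) ℝ) + N := by
    have hkey : ∀ t : ℝ, (2*ρ) * h t + t = φ + n t := by
      intro t
      rcases le_total t φ with hle | hle
      · have h0 : 0 ≤ (2*ρ)⁻¹ * (φ - t) := mul_nonneg (by positivity) (by linarith)
        show (2*ρ) * max ((2 * ρ)⁻¹ * (φ - t)) 0 + t = φ + max (t - φ) 0
        rw [max_eq_left h0, max_eq_right (by linarith)]
        field_simp
        ring
      · have h0 : (2*ρ)⁻¹ * (φ - t) ≤ 0 :=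
          mul_nonpos_of_nonneg_of_nonpos (by positivity) (by linarith)
        show (2*ρ) * max ((2 * ρ)⁻¹ * (φ - t)) 0 + t = φ + max (t - φ) 0
        rw [max_eq_right h0, max_eq_left (by linarith)]
        ring
    calc (2*ρ) • P + Φ
        = cfc (fun t : ℝ => (2*ρ) * h t + t) Φ := by
          rw [cfc_add _ _ _ (by fun_prop) (by fun_prop),
            cfc_const_mul _ _ _ (by fun_prop), cfc_id' ℝ Φ]
      _ = cfc (fun t : ℝ => φ + n t) Φ := by
          congr 1; funext t; exact hkey t
      _ = φ • (1 : Matrix (Fin m) (Fin m) ℝ) + N := by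
          rw [cfc_const_add _ _ _ (by fun_prop), Algebra.algebraMap_eq_smul_one]
  have hNP : N * P = 0 := by
    rw [hN_def, hP_def, ← cfc_mul _ _ _ (by fun_prop) (by fun_prop)]
    have : (fun t : ℝ => n t * h t) = fun _ : ℝ => (0:ℝ) := by
      funext t
      rcases le_total t φ with hle | hle
      · have : n t = 0 := max_eq_right (by simp [hn_def]; linarith)
        simp [this]
      · have : h t = 0 := max_eq_right
          (mul_nonpos_of_nonneg_of_nonpos (by positivity) (by linarith))
        simp [this]
    rw [this, cfc_const_zero]
  have hNdecomp : N = (2*ρ) • P + Φ - φ • (1 : Matrix (Fin m) (Fin m) ℝ) := by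
    rw [key]; abel
  -- the difference formula, for arbitrary admissible Ω
  have hdiff : ∀ Ω : Matrix (Fin m) (Fin m) ℝ, Ω.PosSemidef → Ω.trace = 1 →
      ρ * (Ω * Ω).trace + (Φ * Ω).trace - (ρ * (P * P).trace + (Φ * P).trace)
        = ρ * ((Ω - P) * (Ω - P)).trace + (N * Ω).trace := by
    intro Ω hΩ hΩtr
    have htr1 : (1 : Matrix (Fin m) (Fin m) ℝ).trace = (m : ℝ) := by simp
    have hNΩ : (N * Ω).trace = 2*ρ*(P*Ω).trace + (Φ*Ω).trace - φ := by
      rw [hNdecomp, Matrix.sub_mul, Matrix.add_mul, Matrix.smul_mul, Matrix.smul_mul,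
        Matrix.one_mul, Matrix.trace_sub, Matrix.trace_add, Matrix.trace_smul,
        Matrix.trace_smul, hΩtr]
      simp only [smul_eq_mul]
      ring
    have hNP0 : 2*ρ*(P*P).trace + (Φ*P).trace - φ = 0 := by
      have : (N * P).trace = 0 := by rw [hNP, Matrix.trace_zero]
      rw [hNdecomp, Matrix.sub_mul, Matrix.add_mul, Matrix.smul_mul, Matrix.smul_mul,
        Matrix.one_mul, Matrix.trace_sub, Matrix.trace_add, Matrix.trace_smul,
        Matrix.trace_smul, hPtr] at this
      simp [smul_eq_mul] at this
      linarith
    have hΔ : ((Ω - P) * (Ω - P)).trace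
        = (Ω*Ω).trace - 2*(Ω*P).trace + (P*P).trace := by
      rw [Matrix.sub_mul, Matrix.mul_sub, Matrix.mul_sub, Matrix.trace_sub,
        Matrix.trace_sub, Matrix.trace_sub, Matrix.trace_mul_comm P Ω]
      ring
    have hcomm : (P*Ω).trace = (Ω*P).trace := Matrix.trace_mul_comm P Ω
    rw [hNΩ, hΔ, hcomm]
    linear_combination -hNP0
  refine ⟨φ, P, hPeq, hP, hPtr, ?_, ?_, ?_⟩
  · intro Ω hΩ hΩtr
    have hd := hdiff Ω hΩ hΩtr
    have h1 : 0 ≤ ((Ω - P) * (Ω - P)).trace :=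
      stmt17_trace_sq_nonneg _ (hΩ.1.sub hP.1)
    have h2 : 0 ≤ (N * Ω).trace := stmt17_trace_mul_nonneg hN hΩ
    nlinarith
  · intro Ω hΩ hΩtr heq
    have hd := hdiff Ω hΩ hΩtr
    have h1 : 0 ≤ ((Ω - P) * (Ω - P)).trace :=
      stmt17_trace_sq_nonneg _ (hΩ.1.sub hP.1)
    have h2 : 0 ≤ (N * Ω).trace := stmt17_trace_mul_nonneg hN hΩ
    have h3 : ((Ω - P) * (Ω - P)).trace = 0 := by nlinarith
    have h4 : Ω - P = 0 := stmt17_eq_zero_of_trace_sq (hΩ.1.sub hP.1) h3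
    exact sub_eq_zero.mp h4
  · have h1 := cfc_mul h (fun t : ℝ => t) Φ (by fun_prop) (by fun_prop)
    have h2 := cfc_mul (fun t : ℝ => t) h Φ (by fun_prop) (by fun_prop)
    rw [cfc_id' ℝ Φ] at h1 h2
    rw [hP_def, ← h1, ← h2]
    congr 1; funext t; exact mul_comm _ _
end
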